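/- Let (a_0, a_1, a_2, a_3, a_4; d_1, d_2) be a del Pezzo WCI datum with a_0 = a_1 and d_1 = d_2 = a_0 + a_4. Then either a_4 < 15, or there exists an integer t ≥ 1 such that (a_0, a_1, a_2, a_3, a_4; d_1, d_2) = (1, 1, t, t, 2t−1; 2t, 2t), or there exists an odd integer t ≥ 1 such that (a_0, a_1, a_2, a_3, a_4; d_1, d_2) = (2, 2, t, t, 2t−2; 2t, 2t). -/

import Mathlib

/-- `x` lies in the additive monoid `⟨b, c⟩` of non-negative integer combinations of `b` and `c`,
with membership taken in `ℤ`. -/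
def InSpan2 (b c x : ℤ) : Prop := ∃ α β : ℕ, x = α * b + β * c

/-- `x` lies in the additive monoid `⟨b, c, d⟩` of non-negative integer combinations,
with membership taken in `ℤ`. -/
def InSpan3 (b c d x : ℤ) : Prop := ∃ α β γ : ℕ, x = α * b + β * c + γ * d

/-- A *del Pezzo WCI datum*: Iano-Fletcher's arithmetic criteria for the general codimension-2
weighted complete intersection of multidegree `(d₁, d₂)` in `P(a 0, …, a 4)` to be a well-formed
quasi-smooth del Pezzo surface which is not an intersection with a linear cone. -/
structure IsDelPezzoWCI (a : Fin 5 → ℤ) (d₁ d₂ : ℤ) : Prop where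
  a_pos : ∀ i, 0 < a i
  d₁_pos : 0 < d₁
  d₂_pos : 0 < d₂
  mono : ∀ i j : Fin 5, i ≤ j → a i ≤ a j
  d_le : d₁ ≤ d₂
  lc : ∀ i, d₁ ≠ a i ∧ d₂ ≠ a i
  wf1 : ∀ s : Finset (Fin 5), s.card = 3 → (sᶜ.gcd a ∣ d₁ ∨ sᶜ.gcd a ∣ d₂)
  wf2 : ∀ s : Finset (Fin 5), s.card = 2 → (sᶜ.gcd a ∣ d₁ ∧ sᶜ.gcd a ∣ d₂)
  wf3 : ∀ i : Fin 5, ({i} : Finset (Fin 5))ᶜ.gcd a = 1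
  qs1 : ∀ i, a i ∣ d₁ ∨ a i ∣ d₂ ∨
    ∃ e f : Fin 5, e ≠ f ∧ a i ∣ (d₁ - a e) ∧ a i ∣ (d₂ - a f)
  qs2 : ∀ i j : Fin 5, i ≠ j →
    (InSpan2 (a i) (a j) d₁ ∧ InSpan2 (a i) (a j) d₂) ∨
    (InSpan2 (a i) (a j) d₁ ∧ ∃ e : Fin 5, InSpan2 (a i) (a j) (d₂ - a e)) ∨
    (InSpan2 (a i) (a j) d₂ ∧ ∃ e : Fin 5, InSpan2 (a i) (a j) (d₁ - a e)) ∨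
    (∃ E F : Finset (Fin 5), E.card = 2 ∧ F.card = 2 ∧
      E ∪ F = ({i, j} : Finset (Fin 5))ᶜ ∧
      (∀ e ∈ E, InSpan2 (a i) (a j) (d₁ - a e)) ∧
      (∀ f ∈ F, InSpan2 (a i) (a j) (d₂ - a f)))
  qs3 : ∀ k l m : Fin 5, k ≠ l → k ≠ m → l ≠ m →
    (InSpan3 (a k) (a l) (a m) d₁ ∧ InSpan3 (a k) (a l) (a m) d₂) ∨
    (InSpan3 (a k) (a l) (a m) d₁ ∧
      ∀ i ∈ ({k, l, m} : Finset (Fin 5))ᶜ, InSpan3 (a k) (a l) (a m) (d₂ - a i)) ∨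
    (InSpan3 (a k) (a l) (a m) d₂ ∧
      ∀ i ∈ ({k, l, m} : Finset (Fin 5))ᶜ, InSpan3 (a k) (a l) (a m) (d₁ - a i))
  amp : 1 ≤ a 0 + a 1 + a 2 + a 3 + a 4 - d₁ - d₂


private lemma coprime_of {x y : ℤ} (h : ∀ z : ℤ, z ∣ x → z ∣ y → z ∣ 1) : IsCoprime x y := by
  rw [Int.isCoprime_iff_gcd_eq_one]
  have h2 := h (Int.gcd x y) (Int.gcd_dvd_left x y) (Int.gcd_dvd_right x y)
  have h3 : (Int.gcd x y : ℤ) ∣ ((1 : ℕ) : ℤ) := by exact_mod_cast h2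
  exact Nat.dvd_one.mp (Int.natCast_dvd_natCast.mp h3)

theorem lemma4_case01_subcase01 (a : Fin 5 → ℤ) (d₁ d₂ : ℤ) (h : IsDelPezzoWCI a d₁ d₂)
    (h01 : a 0 = a 1) (hd₁ : d₁ = a 0 + a 4) (hd₂ : d₂ = a 0 + a 4) :
    a 4 < 15 ∨
    (∃ t : ℤ, 1 ≤ t ∧
      a 0 = 1 ∧ a 1 = 1 ∧ a 2 = t ∧ a 3 = t ∧ a 4 = 2 * t - 1 ∧ d₁ = 2 * t ∧ d₂ = 2 * t) ∨
    (∃ t : ℤ, 1 ≤ t ∧ Odd t ∧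
      a 0 = 2 ∧ a 1 = 2 ∧ a 2 = t ∧ a 3 = t ∧ a 4 = 2 * t - 2 ∧ d₁ = 2 * t ∧ d₂ = 2 * t) := by
  subst hd₁
  subst hd₂
  rcases lt_or_ge (a 4) 15 with hlt | h15
  · exact Or.inl hlt
  have fin5 : ∀ j : Fin 5, j = 0 ∨ j = 1 ∨ j = 2 ∨ j = 3 ∨ j = 4 := by decide
  have ha0 := h.a_pos 0
  have ha2 := h.a_pos 2
  have ha3 := h.a_pos 3
  have ha4 := h.a_pos 4
  have h02 : a 0 ≤ a 2 := h.mono 0 2 (by decide)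
  have h23 : a 2 ≤ a 3 := h.mono 2 3 (by decide)
  have h34 : a 3 ≤ a 4 := h.mono 3 4 (by decide)
  have hamp : a 4 + 1 ≤ a 2 + a 3 := by
    have h5 := h.amp
    rw [← h01] at h5
    linarith
  -- gcd consequences of well-formedness
  have G2 : ∀ z : ℤ, z ∣ a 0 → z ∣ a 3 → z ∣ a 4 → z ∣ 1 := by
    intro z hz0 hz3 hz4
    rw [← h.wf3 2]
    refine Finset.dvd_gcd fun j hj => ?_
    rcases fin5 j with rfl | rfl | rfl | rfl | rfl
    · exact hz0
    · exact h01 ▸ hz0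
    · exact absurd hj (by decide)
    · exact hz3
    · exact hz4
  have G3 : ∀ z : ℤ, z ∣ a 0 → z ∣ a 2 → z ∣ a 4 → z ∣ 1 := by
    intro z hz0 hz2 hz4
    rw [← h.wf3 3]
    refine Finset.dvd_gcd fun j hj => ?_
    rcases fin5 j with rfl | rfl | rfl | rfl | rfl
    · exact hz0
    · exact h01 ▸ hz0
    · exact hz2
    · exact absurd hj (by decide)
    · exact hz4
  have G4 : ∀ z : ℤ, z ∣ a 0 → z ∣ a 2 → z ∣ a 3 → z ∣ 1 := by
    intro z hz0 hz2 hz3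
    rw [← h.wf3 4]
    refine Finset.dvd_gcd fun j hj => ?_
    rcases fin5 j with rfl | rfl | rfl | rfl | rfl
    · exact hz0
    · exact h01 ▸ hz0
    · exact hz2
    · exact hz3
    · exact absurd hj (by decide)
  have W1 : ∀ z : ℤ, z ∣ a 3 → z ∣ a 4 → z ∣ a 0 + a 4 := by
    intro z hz3 hz4
    have hdvd : z ∣ (({0, 1, 2} : Finset (Fin 5))ᶜ).gcd a := by
      refine Finset.dvd_gcd fun j hj => ?_
      rcases fin5 j with rfl | rfl | rfl | rfl | rfl
      · exact absurd hj (by decide)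
      · exact absurd hj (by decide)
      · exact absurd hj (by decide)
      · exact hz3
      · exact hz4
    rcases h.wf1 {0, 1, 2} (by decide) with hw | hw
    · exact hdvd.trans hw
    · exact hdvd.trans hw
  have smallAll : a 0 = a 2 → a 0 = a 3 → False := by
    intro e2 e3
    have hd1 : a 0 ∣ 1 := G4 (a 0) dvd_rfl (dvd_of_eq e2) (dvd_of_eq e3)
    have := Int.le_of_dvd one_pos hd1
    linarith
  -- if a3 divides the degree, the degree is 2 * a3
  have key3 : a 3 ∣ a 0 + a 4 → a 0 + a 4 = 2 * a 3 := by
    intro hdvd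
    obtain ⟨k, hk⟩ := hdvd
    have h2le : 2 ≤ k := by
      by_contra hcon
      push_neg at hcon
      have : a 3 * k ≤ a 3 * 1 := mul_le_mul_of_nonneg_left (by omega) ha3.le
      linarith
    have h3le : k ≤ 2 := by
      by_contra hcon
      push_neg at hcon
      have : a 3 * 3 ≤ a 3 * k := mul_le_mul_of_nonneg_left (by omega) ha3.le
      linarith
    have hk2 : k = 2 := le_antisymm h3le h2le
    rw [hk2] at hk
    linarith
  -- consequence of quasi-smoothness at the coordinate point of index 3
  have E3 : a 3 ∣ a 0 + a 4 ∨ a 3 ∣ a 4 ∨ (a 3 ∣ a 0 + a 4 - a 2 ∧ a 3 ∣ a 0) := by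
    rcases h.qs1 3 with h' | h' | ⟨e, f, hef, h1, h2⟩
    · exact Or.inl h'
    · exact Or.inl h'
    · have per : ∀ j : Fin 5, a 3 ∣ a 0 + a 4 - a j →
        a 3 ∣ a 0 + a 4 ∨ a 3 ∣ a 4 ∨ (j = 2 ∧ a 3 ∣ a 0 + a 4 - a 2) ∨ (j = 4 ∧ a 3 ∣ a 0) := by
        intro j hj
        rcases fin5 j with rfl | rfl | rfl | rfl | rfl
        · right; left; rw [show a 4 = a 0 + a 4 - a 0 from by ring]; exact hj
        · right; left; rw [← h01] at hj
          rw [show a 4 = a 0 + a 4 - a 0 from by ring]; exact hj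
        · right; right; left; exact ⟨rfl, hj⟩
        · left; rw [show a 0 + a 4 = (a 0 + a 4 - a 3) + a 3 from by ring]
          exact dvd_add hj dvd_rfl
        · right; right; right
          refine ⟨rfl, ?_⟩
          rw [show a 0 = a 0 + a 4 - a 4 from by ring]; exact hj
      rcases per e h1 with hA | hB | ⟨he2, hc⟩ | ⟨he4, hc⟩
      · exact Or.inl hA
      · exact Or.inr (Or.inl hB)
      · rcases per f h2 with hA | hB | ⟨hf2, _⟩ | ⟨_, hc'⟩
        · exact Or.inl hA
        · exact Or.inr (Or.inl hB)
        · exact absurd (he2.trans hf2.symm) hef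
        · exact Or.inr (Or.inr ⟨hc, hc'⟩)
      · rcases per f h2 with hA | hB | ⟨_, hc'⟩ | ⟨hf4, _⟩
        · exact Or.inl hA
        · exact Or.inr (Or.inl hB)
        · exact Or.inr (Or.inr ⟨hc', hc⟩)
        · exact absurd (he4.trans hf4.symm) hef
  -- the degree is 2 * a3
  have hD : a 0 + a 4 = 2 * a 3 := by
    rcases E3 with h3 | h3 | ⟨h3a, h3b⟩
    · exact key3 h3
    · exact key3 (W1 (a 3) dvd_rfl h3)
    · have hle : a 3 ≤ a 0 := Int.le_of_dvd ha0 h3b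
      have he23 : a 2 = a 3 := by omega
      refine key3 ?_
      rw [show a 0 + a 4 = (a 0 + a 4 - a 2) + a 3 from by omega]
      exact dvd_add h3a dvd_rfl
  have hE4 : a 4 = 2 * a 3 - a 0 := by omega
  -- consequence of quasi-smoothness at the coordinate point of index 0
  have E0 : a 0 ∣ a 0 + a 4 ∨ a 0 ∣ a 0 + a 4 - a 2 ∨ a 0 ∣ a 0 + a 4 - a 3 := by
    rcases h.qs1 0 with h' | h' | ⟨e, f, hef, h1, h2⟩
    · exact Or.inl h'
    · exact Or.inl h'
    · have hj' : ∃ j : Fin 5, j ≠ 4 ∧ a 0 ∣ a 0 + a 4 - a j := by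
        by_cases he : e = 4
        · refine ⟨f, ?_, h2⟩
          intro hf
          exact hef (by rw [he, hf])
        · exact ⟨e, he, h1⟩
      obtain ⟨j, hj4, hj⟩ := hj'
      rcases fin5 j with rfl | rfl | rfl | rfl | rfl
      · left
        rw [show a 0 + a 4 = (a 0 + a 4 - a 0) + a 0 from by ring]
        exact dvd_add hj dvd_rfl
      · left
        rw [← h01] at hj
        rw [show a 0 + a 4 = (a 0 + a 4 - a 0) + a 0 from by ring]
        exact dvd_add hj dvd_rfl
      · exact Or.inr (Or.inl hj)
      · exact Or.inr (Or.inr hj)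
      · exact absurd rfl hj4
  -- a2 divides 2 * a3
  have hBC2 : a 2 ∣ 2 * a 3 := by
    rcases h.qs2 2 4 (by decide) with ⟨h1, _⟩ | ⟨h1, _⟩ | ⟨h1, _⟩ | ⟨SE, SF, hSE, hSF, hEF, hdE, hdF⟩
    -- first three branches : the degree is in the span of a2, a4
    case _ | _ | _ =>
      obtain ⟨p, q, hpq⟩ := h1
      have hpq' : 2 * a 3 = (p : ℤ) * a 2 + (q : ℤ) * a 4 := by
        rw [← hD]; exact hpq
      clear hpq
      rcases q with _ | _ | q' <;> push_cast at hpq'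
      · exact ⟨(p : ℤ), by linear_combination hpq'⟩
      · rcases p with _ | p' <;> push_cast at hpq'
        · exfalso; omega
        · exfalso
          have hba : a 0 = a 2 := by
            have hnn : (0:ℤ) ≤ (p' : ℤ) * a 2 := mul_nonneg (Int.natCast_nonneg p') ha2.le
            have : a 2 ≤ a 0 := by nlinarith
            exact le_antisymm h02 this
          have cop03 : IsCoprime (a 0) (a 3) := coprime_of (fun z hz0 hz3 => G2 z hz0 hz3 (by
            rw [hE4]; exact dvd_sub (hz3.mul_left 2) hz0))
          have hdvd : a 0 ∣ 2 * a 3 := by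
            rcases E0 with h' | h' | h'
            · rw [show (2:ℤ) * a 3 = a 0 + a 4 from by omega]; exact h'
            · rw [show (2:ℤ) * a 3 = a 0 + a 4 from by omega]
              rw [show a 0 + a 4 = (a 0 + a 4 - a 2) + a 0 from by omega]
              exact dvd_add h' dvd_rfl
            · have h3 : a 0 ∣ a 3 := by
                rw [show a 3 = a 0 + a 4 - a 3 from by omega]; exact h'
              exact h3.mul_left 2
          have h2d : a 0 ∣ 2 := cop03.dvd_of_dvd_mul_right hdvd
          have := Int.le_of_dvd (by norm_num) h2d
          omega
      · exfalso
        have hnn1 : (0:ℤ) ≤ (p : ℤ) * a 2 := mul_nonneg (Int.natCast_nonneg p) ha2.le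
        have hnn2 : (0:ℤ) ≤ (q' : ℤ) * a 4 := mul_nonneg (Int.natCast_nonneg q') ha4.le
        have h03 : a 3 ≤ a 0 := by nlinarith
        exact smallAll (by omega) (by omega)
    case _ =>
      -- fourth branch : get a3 ∈ span of a2, a4
      have h3m : (3 : Fin 5) ∈ SE ∪ SF := by rw [hEF]; decide
      have hsp : InSpan2 (a 2) (a 4) (a 0 + a 4 - a 3) := by
        rcases Finset.mem_union.mp h3m with hm | hm
        · exact hdE 3 hm
        · exact hdF 3 hm
      rw [show a 0 + a 4 - a 3 = a 3 from by omega] at hsp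
      obtain ⟨p, q, hpq⟩ := hsp
      rcases q with _ | q' <;> push_cast at hpq
      · exact (show a 2 ∣ a 3 from ⟨(p : ℤ), by linear_combination hpq⟩).mul_left 2
      · exfalso
        have hnn1 : (0:ℤ) ≤ (p : ℤ) * a 2 := mul_nonneg (Int.natCast_nonneg p) ha2.le
        have hnn2 : (0:ℤ) ≤ (q' : ℤ) * a 4 := mul_nonneg (Int.natCast_nonneg q') ha4.le
        have h43 : a 4 ≤ a 3 := by nlinarith
        exact smallAll (by omega) (by omega)
  obtain ⟨k, hk⟩ := hBC2
  have hk2 : 2 ≤ k := by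
    by_contra hcon
    push_neg at hcon
    have : a 2 * k ≤ a 2 * 1 := mul_le_mul_of_nonneg_left (by omega) ha2.le
    linarith
  have hk3 : k ≤ 3 := by
    by_contra hcon
    push_neg at hcon
    have : a 2 * 4 ≤ a 2 * k := mul_le_mul_of_nonneg_left (by omega) ha2.le
    linarith
  interval_cases k
  · -- k = 2 : a2 = a3, the two families
    have hbc : a 2 = a 3 := by linarith
    have hD2 : a 0 + a 4 = 2 * a 2 := by omega
    have cop : IsCoprime (a 0) (a 2) := coprime_of (fun z hz0 hz2 => G4 z hz0 hz2 (hbc ▸ hz2))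
    have hdvd2 : a 0 ∣ 2 * a 2 := by
      rcases E0 with h' | h' | h'
      · rw [show (2:ℤ) * a 2 = a 0 + a 4 from by omega]; exact h'
      · refine (show a 0 ∣ a 2 from ?_).mul_left 2
        rw [show a 2 = a 0 + a 4 - a 2 from by omega]; exact h'
      · refine (show a 0 ∣ a 2 from ?_).mul_left 2
        rw [show a 2 = a 0 + a 4 - a 3 from by omega]; exact h'
    have h2' : a 0 ∣ 2 := cop.dvd_of_dvd_mul_right hdvd2
    have ha02' : a 0 ≤ 2 := Int.le_of_dvd (by norm_num) h2'
    have h12 : a 0 = 1 ∨ a 0 = 2 := by omega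
    rcases h12 with h1 | h1
    · exact Or.inr (Or.inl ⟨a 2, by omega, h1, by omega, rfl, hbc.symm, by omega, by omega, by omega⟩)
    · have hodd : Odd (a 2) := by
        rcases Int.even_or_odd (a 2) with he | ho
        · exfalso
          obtain ⟨r, hr⟩ := he
          have h2a : (2:ℤ) ∣ a 0 := ⟨1, by omega⟩
          have h2b : (2:ℤ) ∣ a 2 := ⟨r, by omega⟩
          have hu := cop.isUnit_of_dvd' h2a h2b
          rcases Int.isUnit_iff.mp hu with h'' | h'' <;> norm_num at h''
        · exact ho
      exact Or.inr (Or.inr ⟨a 2, by omega, hodd, h1, by omega, rfl, hbc.symm, by omega, by omega, by omega⟩)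
  · -- k = 3 : impossible
    exfalso
    have hk3' : 2 * a 3 = 3 * a 2 := by linarith
    have cop02 : IsCoprime (a 0) (a 2) := coprime_of (fun z hz0 hz2 => G3 z hz0 hz2 (by
      have hz' : z ∣ 2 * a 3 := by rw [hk3']; exact hz2.mul_left 3
      rw [hE4]; exact dvd_sub hz' hz0))
    have cop03 : IsCoprime (a 0) (a 3) := coprime_of (fun z hz0 hz3 => G2 z hz0 hz3 (by
      rw [hE4]; exact dvd_sub (hz3.mul_left 2) hz0))
    have ha0le3 : a 0 ≤ 3 := by
      rcases E0 with h' | h' | h'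
      · have h3a2 : a 0 ∣ 3 * a 2 := by
          rw [show (3:ℤ) * a 2 = a 0 + a 4 from by omega]; exact h'
        have := cop02.dvd_of_dvd_mul_right h3a2
        exact Int.le_of_dvd (by norm_num) this
      · have h2a2 : a 0 ∣ 2 * a 2 := by
          rw [show (2:ℤ) * a 2 = a 0 + a 4 - a 2 from by omega]; exact h'
        have := cop02.dvd_of_dvd_mul_right h2a2
        have := Int.le_of_dvd (show (0:ℤ) < 2 from by norm_num) this
        omega
      · have h3 : a 0 ∣ a 3 := by
          rw [show a 3 = a 0 + a 4 - a 3 from by omega]; exact h'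
        have hu := cop03.isUnit_of_dvd' dvd_rfl h3
        rcases Int.isUnit_iff.mp hu with h'' | h'' <;> omega
    omega
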